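/- arXiv:2003.04964 — 4 statements merged into one kernel-verified Lean document; each statement's English description precedes it below -/
import Mathlib

section
/- For all bit strings α and β over the alphabet {0,1}, the pair of equations s₁ = t₁ and s₂ = t₂ holds simultaneously if and only if the single equation s₁ · 0 · s₂ · s₁ · 1 · s₂ = t₁ · 0 · t₂ · t₁ · 1 · t₂ holds, where · denotes concatenation. Concretely: for bit strings a₁, a₂, b₁, b₂, we have (a₁ = b₁ ∧ a₂ = b₂) ↔ a₁ ++ [0] ++ a₂ ++ a₁ ++ [1] ++ a₂ = b₁ ++ [0] ++ b₂ ++ b₁ ++ [1] ++ b₂. -/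
lemma key_aux (x y x' y' : List Bool)
    (hle : x.length ≤ x'.length)
    (h1 : x ++ false :: y = x' ++ false :: y')
    (h2 : x ++ true :: y = x' ++ true :: y') :
    x = x' := by
  rcases lt_or_eq_of_le hle with hlt | heq
  · exfalso
    have e1 : (x ++ false :: y)[x.length]? = x'[x.length]? := by
      rw [h1]; simp [List.getElem?_append, hlt]
    have e2 : (x ++ true :: y)[x.length]? = x'[x.length]? := by
      rw [h2]; simp [List.getElem?_append, hlt]
    rw [List.getElem?_append_right le_rfl] at e1 e2
    simp at e1 e2
    rw [← e1] at e2
    simp at e2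
  · exact (List.append_inj h1 heq).1

lemma key (x y x' y' : List Bool)
    (h1 : x ++ false :: y = x' ++ false :: y')
    (h2 : x ++ true :: y = x' ++ true :: y') :
    x = x' ∧ y = y' := by
  have hx : x = x' := by
    rcases le_total x.length x'.length with h | h
    · exact key_aux x y x' y' h h1 h2
    · exact (key_aux x' y' x y h h1.symm h2.symm).symm
  subst hx
  simpa using h1

theorem stmt_0 (a₁ a₂ b₁ b₂ : List Bool) :
    (a₁ = b₁ ∧ a₂ = b₂) ↔
      a₁ ++ [false] ++ a₂ ++ a₁ ++ [true] ++ a₂ =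
        b₁ ++ [false] ++ b₂ ++ b₁ ++ [true] ++ b₂ := by
  constructor
  · rintro ⟨rfl, rfl⟩; rfl
  · intro h
    have h' : (a₁ ++ false :: a₂) ++ (a₁ ++ true :: a₂) =
        (b₁ ++ false :: b₂) ++ (b₁ ++ true :: b₂) := by
      simpa [List.append_assoc] using h
    have hlen : (a₁ ++ false :: a₂).length = (b₁ ++ false :: b₂).length := by
      have := congrArg List.length h'
      simp at this ⊢
      omega
    obtain ⟨h1, h2⟩ := List.append_inj h' hlen
    exact key a₁ a₂ b₁ b₂ h1 h2
end

section
/- For bit strings u and w, we have (u = ε ∨ w = ε) if and only if (uw = wu and there exist bit strings y₁, y₂, y₃, y₄ with y₁y₂ = 0, y₃y₄ = 1, u y₁ w y₂ = w y₂ u y₁, and u y₃ w y₄ = w y₄ u y₃). -/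
theorem comm_count_aux (x : Bool) (a b : List Bool) (hle : a.length ≤ b.length)
    (h : a ++ b = b ++ a) : a.count x * b.length = b.count x * a.length := by
  rcases eq_or_ne a [] with rfl | ha
  · simp
  · have h1 : (a ++ b).take a.length = a := by simp
    have h2 : (b ++ a).take a.length = b.take a.length := by
      rw [List.take_append_of_le_length hle]
    have htake : a = b.take a.length := by conv_lhs => rw [← h1, h, h2]
    set c := b.drop a.length with hc
    have hb : b = a ++ c := by
      rw [htake, hc]; simp
    have hac : a ++ c = c ++ a := by
      have h' : a ++ (a ++ c) = (a ++ c) ++ a := by rw [← hb]; exact h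
      rw [List.append_assoc] at h'
      exact List.append_cancel_left h'
    have hclt : c.length < b.length := by
      rw [hb]
      have : 0 < a.length := List.length_pos_iff.mpr ha
      simp [List.length_append]; omega
    have ih : a.count x * c.length = c.count x * a.length := by
      rcases le_total a.length c.length with hl | hl
      · exact comm_count_aux x a c hl hac
      · have := comm_count_aux x c a hl hac.symm
        omega
    rw [hb]
    simp only [List.count_append, List.length_append, Nat.mul_add, Nat.add_mul]
    omega
termination_by a.length + b.length
decreasing_by
  all_goals
    simp_wf
    have hpa := List.length_pos_iff.mpr ha
    omega

theorem comm_count (x : Bool) (a b : List Bool) (h : a ++ b = b ++ a) :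
    a.count x * b.length = b.count x * a.length := by
  rcases le_total a.length b.length with h1 | h1
  · exact comm_count_aux x a b h1 h
  · have := comm_count_aux x b a h1 h.symm
    omega

theorem len_eq_counts (a : List Bool) : a.length = a.count true + a.count false := by
  induction a with
  | nil => simp
  | cons hd tl ih =>
    cases hd <;> simp [List.count_cons] <;> omega

theorem split_one (y₁ y₂ : List Bool) (b : Bool) (h : y₁ ++ y₂ = [b]) :
    (y₁ = [] ∧ y₂ = [b]) ∨ (y₁ = [b] ∧ y₂ = []) := by
  cases y₁ with
  | nil => left; simpa using h
  | cons a t =>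
    right
    simp at h
    obtain ⟨rfl, ht, rfl⟩ := h
    simp [ht]

theorem count_zero (x : Bool) (u w : List Bool) (h : u ++ w = w ++ u)
    (y₁ y₂ : List Bool) (hy : y₁ ++ y₂ = [!x])
    (hE : u ++ y₁ ++ w ++ y₂ = w ++ y₂ ++ u ++ y₁) :
    u.count x = 0 ∨ w.count x = 0 := by
  have hc : (u ++ y₁) ++ (w ++ y₂) = (w ++ y₂) ++ (u ++ y₁) := by
    simpa [List.append_assoc] using hE
  have A := comm_count x (u ++ y₁) (w ++ y₂) hc
  have C := comm_count x u w h
  have hx : (!x) ≠ x := by cases x <;> simp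
  rcases split_one y₁ y₂ (!x) hy with ⟨rfl, rfl⟩ | ⟨rfl, rfl⟩
  · left
    simp only [List.count_append, List.length_append, List.count_singleton',
      List.length_cons, List.length_nil, List.count_nil, if_neg hx] at A
    simp only [Nat.mul_add, Nat.add_mul] at A
    omega
  · right
    simp only [List.count_append, List.length_append, List.count_singleton',
      List.length_cons, List.length_nil, List.count_nil, if_neg hx] at A
    simp only [Nat.mul_add, Nat.add_mul] at A
    omega

theorem stmt_1 (u w : List Bool) :
    (u = [] ∨ w = []) ↔
      (u ++ w = w ++ u ∧
        ∃ y₁ y₂ y₃ y₄ : List Bool,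
          y₁ ++ y₂ = [false] ∧ y₃ ++ y₄ = [true] ∧
          u ++ y₁ ++ w ++ y₂ = w ++ y₂ ++ u ++ y₁ ∧
          u ++ y₃ ++ w ++ y₄ = w ++ y₄ ++ u ++ y₃) := by
  constructor
  · rintro (rfl | rfl)
    · exact ⟨by simp, [], [false], [], [true], rfl, rfl, by simp, by simp⟩
    · exact ⟨by simp, [false], [], [true], [], rfl, rfl, by simp, by simp⟩
  · rintro ⟨h, y₁, y₂, y₃, y₄, h01, h1, hE0, hE1⟩
    by_contra hcon
    push_neg at hcon
    obtain ⟨hu, hw⟩ := hcon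
    have H1 : u.count true = 0 ∨ w.count true = 0 :=
      count_zero true u w h y₁ y₂ (by simpa using h01) hE0
    have H0 : u.count false = 0 ∨ w.count false = 0 :=
      count_zero false u w h y₃ y₄ (by simpa using h1) hE1
    have lu := len_eq_counts u
    have lw := len_eq_counts w
    have hul : u.length ≠ 0 := fun hh => hu (List.length_eq_zero_iff.mp hh)
    have hwl : w.length ≠ 0 := fun hh => hw (List.length_eq_zero_iff.mp hh)
    rcases H0 with h0u | h0w <;> rcases H1 with h1u | h1w
    · omega
    · -- u all true, w all false
      cases u with
      | nil => exact hu rfl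
      | cons a t =>
        cases w with
        | nil => exact hw rfl
        | cons b s =>
          have ha : a = true := by
            cases a
            · simp [List.count_cons] at h0u
            · rfl
          have hb : b = false := by
            cases b
            · rfl
            · simp [List.count_cons] at h1w
          subst ha hb
          simp at h
    · -- u all false, w all true
      cases u with
      | nil => exact hu rfl
      | cons a t =>
        cases w with
        | nil => exact hw rfl
        | cons b s =>
          have ha : a = false := by
            cases a
            · rfl
            · simp [List.count_cons] at h1u
          have hb : b = true := by
            cases b
            · simp [List.count_cons] at h0w
            · rfl
          subst ha hb
          simp at h
    · omega
end

section
/- Every total computable function f : ℕ → ℕ is definable over the standard bit-string structure with the substring relation: there exists a first-order formula φ(x, y) in the language {e, 0, 1, ∘, ⊑} such that for all natural numbers a, b, f(a) = b if and only if φ(1^a, 1^b) holds in the standard structure, where 1^n denotes the string of n ones. -/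
open FirstOrder

/-- Function symbols of the language of bit theory with substring relation. -/
inductive BTFunc : ℕ → Type
  | e : BTFunc 0
  | zero : BTFunc 0
  | one : BTFunc 0
  | concat : BTFunc 2

/-- Relation symbols: the substring relation. -/
inductive BTRel : ℕ → Type
  | sub : BTRel 2

/-- The first-order language `{e, 0, 1, ∘, ⊑}` of bit theory. -/
def LBT : FirstOrder.Language := ⟨BTFunc, BTRel⟩

/-- The standard structure 𝔅 on bit strings, with ⊑ the substring relation. -/
instance : LBT.Structure (List Bool) where
  funMap {n} f := match f with
    | .e => fun _ => []
    | .zero => fun _ => [false]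
    | .one => fun _ => [true]
    | .concat => fun v => v 0 ++ v 1
  RelMap {n} r := match r with
    | .sub => fun v => v 0 <:+: v 1

abbrev S := List Bool

/-- String expressions over `k` variables. -/
inductive E (k : ℕ) where
  | var (i : Fin k)
  | lit (c : S)
  | cat (a b : E k)

namespace E

def eval {k : ℕ} : E k → (Fin k → S) → S
  | var i, v => v i
  | lit c, _ => c
  | cat a b, v => a.eval v ++ b.eval v

def litTerm {α : Type} : S → LBT.Term α
  | [] => Language.Term.func BTFunc.e ![]
  | b :: l =>
      Language.Term.func BTFunc.concat
        ![Language.Term.func (if b then BTFunc.one else BTFunc.zero) ![], litTerm l]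

lemma realize_litTerm {α : Type} (c : S) (v : α → S) :
    (litTerm (α := α) c).realize v = c := by
  induction c with
  | nil => rfl
  | cons b l ih =>
    have h : (litTerm (α := α) (b :: l)).realize v =
        (if b then [true] else [false]) ++ (litTerm (α := α) l).realize v := by
      cases b <;> rfl
    rw [h, ih]
    cases b <;> rfl

def toTerm {k : ℕ} : E k → LBT.Term (Fin k)
  | var i => Language.Term.var i
  | lit c => litTerm c
  | cat a b => Language.Term.func BTFunc.concat ![a.toTerm, b.toTerm]

lemma realize_toTerm {k : ℕ} (e : E k) (v : Fin k → S) :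
    e.toTerm.realize v = e.eval v := by
  induction e with
  | var i => rfl
  | lit c => exact realize_litTerm c v
  | cat a b iha ihb =>
    have h : ((a.cat b).toTerm).realize v = a.toTerm.realize v ++ b.toTerm.realize v := rfl
    rw [h, iha, ihb]
    rfl

end E

/-- Definability of a `k`-ary relation on bit strings. -/
def Def {k : ℕ} (R : (Fin k → S) → Prop) : Prop :=
  ∃ φ : LBT.Formula (Fin k), ∀ v : Fin k → S, φ.Realize v ↔ R v

namespace Def

variable {k m : ℕ}

lemma congr {R R' : (Fin k → S) → Prop} (h : Def R) (h' : ∀ v, R v ↔ R' v) : Def R' := by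
  obtain ⟨φ, hφ⟩ := h
  exact ⟨φ, fun v => (hφ v).trans (h' v)⟩

lemma and {R Q : (Fin k → S) → Prop} (hR : Def R) (hQ : Def Q) :
    Def fun v => R v ∧ Q v := by
  obtain ⟨φ, hφ⟩ := hR; obtain ⟨ψ, hψ⟩ := hQ
  exact ⟨φ ⊓ ψ, fun v => by rw [Language.Formula.realize_inf, hφ, hψ]⟩

lemma or {R Q : (Fin k → S) → Prop} (hR : Def R) (hQ : Def Q) :
    Def fun v => R v ∨ Q v := by
  obtain ⟨φ, hφ⟩ := hR; obtain ⟨ψ, hψ⟩ := hQ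
  exact ⟨φ ⊔ ψ, fun v => by rw [Language.Formula.realize_sup, hφ, hψ]⟩

lemma not {R : (Fin k → S) → Prop} (hR : Def R) : Def fun v => ¬ R v := by
  obtain ⟨φ, hφ⟩ := hR
  exact ⟨φ.not, fun v => by rw [Language.Formula.realize_not, hφ]⟩

lemma imp {R Q : (Fin k → S) → Prop} (hR : Def R) (hQ : Def Q) :
    Def fun v => R v → Q v :=
  ((hR.not).or hQ).congr fun v => by tauto

lemma top : Def fun _ : Fin k → S => True :=
  ⟨⊤, fun v => by simp⟩

lemma eq (e₁ e₂ : E k) : Def fun v => e₁.eval v = e₂.eval v := by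
  refine ⟨Language.Term.equal e₁.toTerm e₂.toTerm, fun v => ?_⟩
  rw [Language.Formula.realize_equal, E.realize_toTerm, E.realize_toTerm]

lemma isInfix (e₁ e₂ : E k) : Def fun v => e₁.eval v <:+: e₂.eval v := by
  refine ⟨Language.Relations.formula₂ (BTRel.sub : LBT.Relations 2) e₁.toTerm e₂.toTerm,
    fun v => ?_⟩
  exact (Language.Formula.realize_rel₂ (R := (BTRel.sub : LBT.Relations 2))
    (t₁ := e₁.toTerm) (t₂ := e₂.toTerm) (v := v)).trans
    (by rw [E.realize_toTerm, E.realize_toTerm])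

lemma relabel {R : (Fin k → S) → Prop} (σ : Fin k → Fin m) (h : Def R) :
    Def fun v : Fin m → S => R (v ∘ σ) := by
  obtain ⟨φ, hφ⟩ := h
  exact ⟨φ.relabel σ, fun v => by rw [Language.Formula.realize_relabel, hφ]⟩

end Def

/-- Formula-level existential quantification over a new last variable. -/
lemma formula_ex {k : ℕ} (φ : LBT.Formula (Fin (k + 1))) :
    ∃ ψ : LBT.Formula (Fin k), ∀ v : Fin k → S,
      ψ.Realize v ↔ ∃ x : S, φ.Realize (Fin.snoc v x) := by
  refine ⟨(Language.BoundedFormula.relabel (Fin.lastCases (motive := fun _ => Fin k ⊕ Fin 1) (Sum.inr 0) Sum.inl) φ).ex,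
    fun v => ?_⟩
  rw [Language.Formula.Realize, Language.BoundedFormula.realize_ex]
  refine exists_congr fun x => ?_
  rw [Language.BoundedFormula.realize_relabel]
  have h2 : ∀ a b : Fin 0 → S, a = b := fun a b => funext fun i => i.elim0
  have h1 : (Sum.elim v ((Fin.snoc (default : Fin 0 → S) x : Fin (0 + 1) → S) ∘ Fin.castAdd 0) ∘
      (Fin.lastCases (motive := fun _ => Fin k ⊕ Fin 1) (Sum.inr 0) Sum.inl)) = Fin.snoc v x := by
    funext i
    refine Fin.lastCases ?_ (fun j => ?_) i
    · simp [Fin.snoc_last]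
      rfl
    · simp [Fin.snoc_castSucc]
  exact iff_of_eq (congrArg₂ (fun a b => Language.BoundedFormula.Realize φ a b) h1 (h2 _ _))

namespace Def

variable {k m : ℕ}

lemma ex {R : (Fin (k + 1) → S) → Prop} (h : Def R) :
    Def fun v : Fin k → S => ∃ x : S, R (Fin.snoc v x) := by
  obtain ⟨φ, hφ⟩ := h
  obtain ⟨ψ, hψ⟩ := formula_ex φ
  exact ⟨ψ, fun v => (hψ v).trans (exists_congr fun x => hφ _)⟩

lemma ex' {R : (Fin k → S) → S → Prop}
    (h : Def fun v : Fin (k + 1) → S => R (fun i => v i.castSucc) (v (Fin.last k))) :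
    Def fun v => ∃ x : S, R v x := by
  refine h.ex.congr fun v => exists_congr fun x => ?_
  simp only [Fin.snoc_castSucc, Fin.snoc_last]

lemma all' {R : (Fin k → S) → S → Prop}
    (h : Def fun v : Fin (k + 1) → S => R (fun i => v i.castSucc) (v (Fin.last k))) :
    Def fun v => ∀ x : S, R v x := by
  refine (Def.ex' (R := fun v x => ¬ R v x) h.not).not.congr fun v => ?_
  push_neg
  exact Iff.rfl

end Def

/-! ### Tallies -/

/-- The tally string `1^n`. -/
def t (n : ℕ) : S := List.replicate n true

lemma t_add (m n : ℕ) : t (m + n) = t m ++ t n := List.replicate_add m n true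

lemma t_inj {m n : ℕ} (h : t m = t n) : m = n := by
  have := congrArg List.length h
  simpa [t] using this

lemma singleton_infix {a : Bool} {l : S} : ([a] : S) <:+: l ↔ a ∈ l := by
  constructor
  · intro h
    exact h.sublist.subset (List.mem_singleton_self a)
  · intro h
    obtain ⟨s, u, rfl⟩ := List.append_of_mem h
    exact ⟨s, u, by simp⟩

lemma tally_iff (s : S) : ¬((([false] : S)) <:+: s) ↔ ∃ n, s = t n := by
  constructor
  · intro h
    refine ⟨s.length, ?_⟩
    rw [t, List.eq_replicate_iff]
    refine ⟨rfl, fun b hb => ?_⟩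
    cases b
    · exact absurd (singleton_infix.2 hb) h
    · rfl
  · rintro ⟨n, rfl⟩ h
    have : false ∈ t n := singleton_infix.1 h
    simp [t] at this

lemma t_infix {m n : ℕ} : t m <:+: t n ↔ m ≤ n := by
  constructor
  · intro h
    simpa [t] using h.sublist.length_le
  · intro h
    refine ⟨[], t (n - m), ?_⟩
    rw [List.nil_append, ← t_add]
    congr 1
    omega

lemma t_comp_snoc {k : ℕ} (w : Fin k → ℕ) (n : ℕ) :
    (Fin.snoc (fun i => t (w i)) (t n) : Fin (k + 1) → S) =
      fun i => t ((Fin.snoc w n : Fin (k + 1) → ℕ) i) := by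
  funext i
  refine Fin.lastCases ?_ (fun j => ?_) i <;> simp

/-- Definability of a `k`-ary relation on ℕ via tallies. -/
def DefN {k : ℕ} (R : (Fin k → ℕ) → Prop) : Prop :=
  ∃ φ : LBT.Formula (Fin k), ∀ w : Fin k → ℕ, φ.Realize (fun i => t (w i)) ↔ R w

namespace DefN

variable {k m : ℕ}

lemma congr {R R' : (Fin k → ℕ) → Prop} (h : DefN R) (h' : ∀ w, R w ↔ R' w) : DefN R' := by
  obtain ⟨φ, hφ⟩ := h
  exact ⟨φ, fun w => (hφ w).trans (h' w)⟩

lemma ofDef {R : (Fin k → S) → Prop} (h : Def R) : DefN fun w => R fun i => t (w i) := by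
  obtain ⟨φ, hφ⟩ := h
  exact ⟨φ, fun w => hφ _⟩

lemma and {R Q : (Fin k → ℕ) → Prop} (hR : DefN R) (hQ : DefN Q) :
    DefN fun w => R w ∧ Q w := by
  obtain ⟨φ, hφ⟩ := hR; obtain ⟨ψ, hψ⟩ := hQ
  exact ⟨φ ⊓ ψ, fun w => by rw [Language.Formula.realize_inf, hφ, hψ]⟩

lemma or {R Q : (Fin k → ℕ) → Prop} (hR : DefN R) (hQ : DefN Q) :
    DefN fun w => R w ∨ Q w := by
  obtain ⟨φ, hφ⟩ := hR; obtain ⟨ψ, hψ⟩ := hQ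
  exact ⟨φ ⊔ ψ, fun w => by rw [Language.Formula.realize_sup, hφ, hψ]⟩

lemma not {R : (Fin k → ℕ) → Prop} (hR : DefN R) : DefN fun w => ¬ R w := by
  obtain ⟨φ, hφ⟩ := hR
  exact ⟨φ.not, fun w => by rw [Language.Formula.realize_not, hφ]⟩

lemma imp {R Q : (Fin k → ℕ) → Prop} (hR : DefN R) (hQ : DefN Q) :
    DefN fun w => R w → Q w :=
  ((hR.not).or hQ).congr fun w => by tauto

lemma relabel {R : (Fin k → ℕ) → Prop} (σ : Fin k → Fin m) (h : DefN R) :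
    DefN fun w : Fin m → ℕ => R (w ∘ σ) := by
  obtain ⟨φ, hφ⟩ := h
  exact ⟨φ.relabel σ, fun w => by rw [Language.Formula.realize_relabel]; exact hφ _⟩

lemma ex' {R : (Fin k → ℕ) → ℕ → Prop}
    (h : DefN fun w : Fin (k + 1) → ℕ => R (fun i => w i.castSucc) (w (Fin.last k))) :
    DefN fun w => ∃ n : ℕ, R w n := by
  obtain ⟨φ, hφ⟩ := h
  obtain ⟨χ, hχ⟩ := (Def.isInfix (E.lit [false]) (E.var (Fin.last k))).not
  obtain ⟨ψ, hψ⟩ := formula_ex (χ ⊓ φ)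
  refine ⟨ψ, fun w => ?_⟩
  rw [hψ]
  constructor
  · rintro ⟨x, hx⟩
    rw [Language.Formula.realize_inf] at hx
    obtain ⟨hx1, hx2⟩ := hx
    rw [hχ] at hx1
    simp only [E.eval] at hx1
    rw [Fin.snoc_last] at hx1
    obtain ⟨n, rfl⟩ := (tally_iff _).1 hx1
    refine ⟨n, ?_⟩
    rw [t_comp_snoc] at hx2
    have := (hφ (Fin.snoc w n)).1 hx2
    simpa [Fin.snoc_castSucc, Fin.snoc_last] using this
  · rintro ⟨n, hn⟩
    refine ⟨t n, ?_⟩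
    rw [Language.Formula.realize_inf, hχ]
    constructor
    · simp only [E.eval, Fin.snoc_last]
      rw [tally_iff]
      exact ⟨n, rfl⟩
    · rw [t_comp_snoc]
      apply (hφ (Fin.snoc w n)).2
      simpa [Fin.snoc_castSucc, Fin.snoc_last] using hn

lemma all' {R : (Fin k → ℕ) → ℕ → Prop}
    (h : DefN fun w : Fin (k + 1) → ℕ => R (fun i => w i.castSucc) (w (Fin.last k))) :
    DefN fun w => ∀ n : ℕ, R w n := by
  refine (DefN.ex' (R := fun w n => ¬ R w n) h.not).not.congr fun w => ?_
  push_neg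
  exact Iff.rfl

end DefN

/-! ### Atomic definable relations on ℕ -/

lemma t_eq_iff {a b : ℕ} : t a = t b ↔ a = b :=
  ⟨t_inj, fun h => by rw [h]⟩

lemma defN_add : DefN (k := 3) (fun w => w 0 + w 1 = w 2) := by
  refine (DefN.ofDef (Def.eq (E.cat (E.var 0) (E.var 1)) (E.var 2))).congr fun w => ?_
  simp only [E.eval, E.eval]
  rw [← t_add, t_eq_iff]

lemma defN_eq : DefN (k := 2) (fun w => w 0 = w 1) := by
  refine (DefN.ofDef (Def.eq (E.var 0) (E.var 1))).congr fun w => ?_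
  simp only [E.eval]
  rw [t_eq_iff]

lemma defN_le : DefN (k := 2) (fun w => w 0 ≤ w 1) := by
  refine (DefN.ofDef (Def.isInfix (E.var 0) (E.var 1))).congr fun w => ?_
  simp only [E.eval]
  rw [t_infix]

lemma defN_lt : DefN (k := 2) (fun w => w 0 < w 1) := by
  refine (defN_le.and defN_eq.not).congr fun w => ?_
  omega

lemma defN_const (c : ℕ) : DefN (k := 1) (fun w => w 0 = c) := by
  refine (DefN.ofDef (Def.eq (E.var 0) (E.lit (t c)))).congr fun w => ?_
  simp only [E.eval]
  rw [t_eq_iff]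

lemma defN_succ : DefN (k := 2) (fun w => w 0 + 1 = w 1) := by
  refine (DefN.ofDef (Def.eq (E.cat (E.var 0) (E.lit (t 1))) (E.var 1))).congr fun w => ?_
  simp only [E.eval]
  rw [← t_add, t_eq_iff]

lemma Def.forall_fin {k : ℕ} {P : Fin k → (Fin k → S) → Prop} (h : ∀ i, Def (P i)) :
    Def fun v => ∀ i, P i v := by
  have key : ∀ l : List (Fin k), Def fun v => ∀ i ∈ l, P i v := by
    intro l
    induction l with
    | nil => exact Def.top.congr (by simp)
    | cons a l ih =>
      exact (((h a).and ih)).congr fun v => by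
        rw [List.forall_mem_cons]
  exact (key (List.finRange k)).congr fun v =>
    ⟨fun hh i => hh i (List.mem_finRange i), fun hh i _ => hh i⟩

lemma DefN.toDef {k : ℕ} {R : (Fin k → ℕ) → Prop} (h : DefN R) :
    Def fun v : Fin k → S => ∃ w : Fin k → ℕ, (∀ i, v i = t (w i)) ∧ R w := by
  obtain ⟨φ, hφ⟩ := h
  obtain ⟨χ, hχ⟩ := Def.forall_fin (P := fun i v => ∃ n, v i = t n)
      (fun i => ((Def.isInfix (E.lit [false]) (E.var i)).not).congr fun v => by
        simpa only [E.eval] using tally_iff (v i))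
  refine ⟨χ ⊓ φ, fun v => ?_⟩
  rw [Language.Formula.realize_inf, hχ]
  constructor
  · rintro ⟨h1, h2⟩
    choose w hw using h1
    refine ⟨w, hw, ?_⟩
    have hv : v = fun i => t (w i) := funext hw
    rw [hv] at h2
    exact (hφ w).1 h2
  · rintro ⟨w, hw, hR⟩
    have hv : v = fun i => t (w i) := funext hw
    rw [hv]
    exact ⟨fun i => ⟨w i, rfl⟩, (hφ w).2 hR⟩

/-! ### Sequence coding into bit strings -/

/-- The code of a list of pairs: `00 1^(a+1) 0 1^(b+1) 00 ... 00`. -/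
def code : List (ℕ × ℕ) → S
  | [] => [false, false]
  | (a, b) :: l => false :: false :: (t (a + 1) ++ (false :: (t (b + 1) ++ code l)))

/-- The pattern whose occurrence in a code signals membership of `(p,q)`. -/
def pat (p q : ℕ) : S :=
  false :: false :: (t (p + 1) ++ (false :: (t (q + 1) ++ [false, false])))

lemma code_shape (l : List (ℕ × ℕ)) : ∃ r : S, code l = false :: false :: r := by
  cases l with
  | nil => exact ⟨[], rfl⟩
  | cons pq l =>
    obtain ⟨a, b⟩ := pq
    exact ⟨_, rfl⟩

lemma tally_sep {xs ys : S} : ∀ {m n : ℕ},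
    t m ++ false :: xs = t n ++ false :: ys → m = n ∧ xs = ys := by
  intro m
  induction m with
  | zero =>
    intro n h
    cases n with
    | zero => simpa [t] using h
    | succ n => simp [t, List.replicate_succ] at h
  | succ m ih =>
    intro n h
    cases n with
    | zero => simp [t, List.replicate_succ] at h
    | succ n =>
      rw [show t (m + 1) = true :: t m from rfl, show t (n + 1) = true :: t n from rfl] at h
      simp only [List.cons_append, List.cons.injEq, true_and] at h
      obtain ⟨h1, h2⟩ := ih h
      exact ⟨by omega, h2⟩

lemma suffix_tally_sep {i : ℕ} {a : S} : ∀ {j : ℕ}, a <:+ (t j ++ false :: t i) →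
    (∃ j' ≤ j, a = t j' ++ false :: t i) ∨ (∃ i' ≤ i, a = t i') := by
  intro j
  induction j with
  | zero =>
    intro h
    rw [show t 0 = ([] : S) from rfl, List.nil_append] at h
    rcases List.suffix_cons_iff.1 h with rfl | h
    · exact Or.inl ⟨0, le_refl 0, by rw [show t 0 = ([] : S) from rfl, List.nil_append]⟩
    · obtain ⟨n, hn, rfl⟩ := List.sublist_replicate_iff.1 h.sublist
      exact Or.inr ⟨n, hn, rfl⟩
  | succ j ih =>
    intro h
    rw [show t (j + 1) = true :: t j from rfl, List.cons_append] at h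
    rcases List.suffix_cons_iff.1 h with rfl | h
    · exact Or.inl ⟨j + 1, le_refl _,
        by rw [show t (j + 1) = true :: t j from rfl, List.cons_append]⟩
    · rcases ih h with ⟨j', hj', rfl⟩ | hr
      · exact Or.inl ⟨j', Nat.le_succ_of_le hj', rfl⟩
      · exact Or.inr hr

lemma pat_mem_code : ∀ {l : List (ℕ × ℕ)} {p q : ℕ}, pat p q <:+: code l ↔ (p, q) ∈ l := by
  intro l
  induction l with
  | nil =>
    intro p q
    simp only [List.not_mem_nil, iff_false]
    intro h
    have := h.sublist.length_le
    simp [pat, code, t] at this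
  | cons ab l2 ih =>
    obtain ⟨a, b⟩ := ab
    intro p q
    have hc : code ((a, b) :: l2) =
        (false :: false :: (t (a + 1) ++ (false :: t (b + 1)))) ++ code l2 := by
      simp [code, List.append_assoc]
    obtain ⟨r, hr⟩ := code_shape l2
    constructor
    · rintro ⟨u, v, huv⟩
      rw [hc, List.append_assoc] at huv
      rcases List.append_eq_append_iff.1 huv with ⟨a', ha1, ha2⟩ | ⟨c', hc1, hc2⟩
      · -- pat p q ++ v = a' ++ code l2, where a' is a suffix of the first segment
        have hsuf : a' <:+ (false :: false :: (t (a + 1) ++ (false :: t (b + 1)))) :=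
          ⟨u, ha1.symm⟩
        rcases List.suffix_cons_iff.1 hsuf with rfl | hsuf1
        · -- full match
          rw [pat, hr] at ha2
          simp only [List.cons_append, List.append_assoc, List.cons.injEq, true_and] at ha2
          obtain ⟨h1, h2⟩ := tally_sep ha2
          obtain ⟨h3, -⟩ := tally_sep h2
          have hp : p = a := by omega
          have hq : q = b := by omega
          rw [hp, hq]
          exact List.mem_cons_self
        rcases List.suffix_cons_iff.1 hsuf1 with rfl | hsuf2
        · -- shifted by one: mismatch at second character
          exfalso
          rw [pat, show t (a + 1) = true :: t a from rfl] at ha2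
          simp at ha2
        · rcases suffix_tally_sep hsuf2 with ⟨j', hj', rfl⟩ | ⟨i', hi', rfl⟩
          · exfalso
            cases j' with
            | zero =>
              rw [pat, show t 0 = ([] : S) from rfl,
                show t (b + 1) = true :: t b from rfl] at ha2
              simp at ha2
            | succ j'' =>
              rw [pat, show t (j'' + 1) = true :: t j'' from rfl] at ha2
              simp at ha2
          · cases i' with
            | zero =>
              rw [show t 0 = ([] : S) from rfl, List.nil_append] at ha2
              exact List.mem_cons_of_mem _ (ih.1 ⟨[], v, by simpa using ha2⟩)
            | succ i'' =>
              exfalso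
              rw [pat, show t (i'' + 1) = true :: t i'' from rfl] at ha2
              simp at ha2
      · -- occurrence entirely inside code l2
        exact List.mem_cons_of_mem _
          (ih.1 ⟨c', v, by simpa [List.append_assoc] using hc2.symm⟩)
    · intro hmem
      rcases List.mem_cons.1 hmem with heq | hmem2
      · obtain ⟨rfl, rfl⟩ := Prod.ext_iff.1 heq
        refine ⟨[], r, ?_⟩
        simp [pat, code, hr, List.append_assoc]
      · have h2 : pat p q <:+: code l2 := ih.2 hmem2
        refine h2.trans ⟨false :: false :: (t (a + 1) ++ (false :: t (b + 1))), [], ?_⟩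
        rw [List.append_nil, hc]

/-! ### Readable combinator helpers -/

lemma Def.of1 {Q : S → Prop} {m : ℕ} (h : Def (k := 1) fun v => Q (v 0)) (i : Fin m) :
    Def fun v : Fin m → S => Q (v i) :=
  (h.relabel ![i]).congr fun v => Iff.rfl

lemma Def.of2 {Q : S → S → Prop} {m : ℕ} (h : Def (k := 2) fun v => Q (v 0) (v 1))
    (i j : Fin m) : Def fun v : Fin m → S => Q (v i) (v j) :=
  (h.relabel ![i, j]).congr fun v => Iff.rfl

lemma Def.of3 {Q : S → S → S → Prop} {m : ℕ}
    (h : Def (k := 3) fun v => Q (v 0) (v 1) (v 2)) (i j l : Fin m) :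
    Def fun v : Fin m → S => Q (v i) (v j) (v l) :=
  (h.relabel ![i, j, l]).congr fun v => Iff.rfl

lemma Def.of4 {Q : S → S → S → S → Prop} {m : ℕ}
    (h : Def (k := 4) fun v => Q (v 0) (v 1) (v 2) (v 3)) (i j l o : Fin m) :
    Def fun v : Fin m → S => Q (v i) (v j) (v l) (v o) :=
  (h.relabel ![i, j, l, o]).congr fun v => Iff.rfl

lemma DefN.of1 {Q : ℕ → Prop} {m : ℕ} (h : DefN (k := 1) fun w => Q (w 0)) (i : Fin m) :
    DefN fun w : Fin m → ℕ => Q (w i) :=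
  (h.relabel ![i]).congr fun w => Iff.rfl

lemma DefN.of2 {Q : ℕ → ℕ → Prop} {m : ℕ} (h : DefN (k := 2) fun w => Q (w 0) (w 1))
    (i j : Fin m) : DefN fun w : Fin m → ℕ => Q (w i) (w j) :=
  (h.relabel ![i, j]).congr fun w => Iff.rfl

lemma DefN.of3 {Q : ℕ → ℕ → ℕ → Prop} {m : ℕ}
    (h : DefN (k := 3) fun w => Q (w 0) (w 1) (w 2)) (i j l : Fin m) :
    DefN fun w : Fin m → ℕ => Q (w i) (w j) (w l) :=
  (h.relabel ![i, j, l]).congr fun w => Iff.rfl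

lemma DefN.of4 {Q : ℕ → ℕ → ℕ → ℕ → Prop} {m : ℕ}
    (h : DefN (k := 4) fun w => Q (w 0) (w 1) (w 2) (w 3)) (i j l o : Fin m) :
    DefN fun w : Fin m → ℕ => Q (w i) (w j) (w l) (w o) :=
  (h.relabel ![i, j, l, o]).congr fun w => Iff.rfl

/-! ### Semantic predicates for the coding formula -/

/-- `x` is a tally (a string of `1`s). -/
def Tal (x : S) : Prop := ¬ ((([false] : S)) <:+: x)

lemma tal_t (n : ℕ) : Tal (t n) := (tally_iff (t n)).2 ⟨n, rfl⟩

def patS (x y : S) : S :=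
  [false, false] ++ (x ++ ([true, false] ++ (y ++ [true, false, false])))

lemma t_succ_append (m : ℕ) : t (m + 1) = t m ++ [true] := by
  rw [t_add]; rfl

lemma patS_t (p q : ℕ) : patS (t p) (t q) = pat p q := by
  rw [patS, pat, t_succ_append p, t_succ_append q]
  simp [List.append_assoc]

def G2 (R : ℕ → ℕ → Prop) (x y : S) : Prop :=
  ∃ a b : ℕ, x = t a ∧ y = t b ∧ R a b

def G4 (R : ℕ → ℕ → ℕ → ℕ → Prop) (x y z u : S) : Prop :=
  ∃ a b c d : ℕ, x = t a ∧ y = t b ∧ z = t c ∧ u = t d ∧ R a b c d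

lemma DefN.toDef2 {R : ℕ → ℕ → Prop} (h : DefN (k := 2) fun w => R (w 0) (w 1)) :
    Def (k := 2) fun v => G2 R (v 0) (v 1) := by
  refine h.toDef.congr fun v => ⟨?_, ?_⟩
  · rintro ⟨w, hw, hr⟩
    exact ⟨w 0, w 1, hw 0, hw 1, hr⟩
  · rintro ⟨a, b, ha, hb, hr⟩
    refine ⟨![a, b], fun i => ?_, hr⟩
    fin_cases i
    · exact ha
    · exact hb

lemma DefN.toDef4 {R : ℕ → ℕ → ℕ → ℕ → Prop}
    (h : DefN (k := 4) fun w => R (w 0) (w 1) (w 2) (w 3)) :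
    Def (k := 4) fun v => G4 R (v 0) (v 1) (v 2) (v 3) := by
  refine h.toDef.congr fun v => ⟨?_, ?_⟩
  · rintro ⟨w, hw, hr⟩
    exact ⟨w 0, w 1, w 2, w 3, hw 0, hw 1, hw 2, hw 3, hr⟩
  · rintro ⟨a, b, c, d, ha, hb, hc, hd, hr⟩
    refine ⟨![a, b, c, d], fun i => ?_, hr⟩
    fin_cases i
    · exact ha
    · exact hb
    · exact hc
    · exact hd

/-! ### Atomic `Def` facts for the coding formula -/

def patE {m : ℕ} (ex ey : E m) : E m :=
  E.cat (E.lit [false, false]) (E.cat ex (E.cat (E.lit [true, false])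
    (E.cat ey (E.lit [true, false, false]))))

lemma def_tal : Def (k := 1) fun v => Tal (v 0) :=
  (Def.isInfix (E.lit [false]) (E.var 0)).not

lemma def_blk : Def (k := 3) fun v => patS (v 0) (v 1) <:+: v 2 :=
  Def.isInfix (patE (E.var 0) (E.var 1)) (E.var 2)

lemma def_blk0 : Def (k := 2) fun v => patS [] (v 0) <:+: v 1 :=
  Def.isInfix (patE (E.lit []) (E.var 0)) (E.var 1)

lemma def_blkS : Def (k := 3) fun v => patS (v 0 ++ [true]) (v 1) <:+: v 2 :=
  Def.isInfix (patE (E.cat (E.var 0) (E.lit [true])) (E.var 1)) (E.var 2)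

lemma def_eqv : Def (k := 2) fun v => v 0 = v 1 := Def.eq (E.var 0) (E.var 1)

lemma def_inf : Def (k := 2) fun v => v 0 <:+: v 1 := Def.isInfix (E.var 0) (E.var 1)

/-! ### Course-of-values recursion is definable -/

def recF (f0 : ℕ → ℕ) (st : ℕ → ℕ → ℕ → ℕ) (p : ℕ) : ℕ → ℕ
  | 0 => f0 p
  | n + 1 => st p n (recF f0 st p n)

lemma course_iff (f0 : ℕ → ℕ) (st : ℕ → ℕ → ℕ → ℕ) (p n val : ℕ) :
    (Tal (t p) ∧ (Tal (t n) ∧ (Tal (t val) ∧ ∃ W : S,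
      (∀ x y y', Tal x → Tal y → Tal y' →
          (patS x y <:+: W → (patS x y' <:+: W → y = y'))) ∧
      ((∃ c, Tal c ∧ (G2 (fun a b => f0 a = b) (t p) c ∧ patS [] c <:+: W)) ∧
      ((∀ x y, Tal x → Tal y → (patS x y <:+: W → ((x <:+: t n ∧ ¬ x = t n) →
          ∃ y', Tal y' ∧ (G4 (fun a b c d => st a b c = d) (t p) x y y' ∧
            patS (x ++ [true]) y' <:+: W)))) ∧
       patS (t n) (t val) <:+: W)))))
    ↔ recF f0 st p n = val := by
  constructor
  · rintro ⟨-, -, -, W, hU, ⟨c0, tc0, ⟨a, b, hpa, hc0, hf⟩, hB0⟩, hS, hF⟩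
    have hap : a = p := t_inj hpa.symm
    subst hap
    have claim : ∀ i, i ≤ n → patS (t i) (t (recF f0 st a i)) <:+: W := by
      intro i
      induction i with
      | zero =>
        intro _
        have h0' : patS [] c0 <:+: W := hB0
        rw [hc0] at h0'
        have : recF f0 st a 0 = b := hf
        rw [show t 0 = ([] : S) from rfl, this]
        exact h0'
      | succ i ih =>
        intro hle
        have hbi := ih (by omega)
        obtain ⟨y', ty', ⟨a', b', c', d', hpa', hxi, hyc, rfl, hstv⟩, hblk⟩ :=
          hS (t i) (t (recF f0 st a i)) (tal_t _) (tal_t _) hbi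
            ⟨t_infix.2 (by omega), fun he => by have := t_inj he; omega⟩
        have ha' : a' = a := t_inj hpa'.symm
        have hb' : b' = i := t_inj hxi.symm
        have hc' : c' = recF f0 st a i := t_inj hyc.symm
        have hd : d' = recF f0 st a (i + 1) := by
          rw [show recF f0 st a (i + 1) = st a i (recF f0 st a i) from rfl, ← hstv,
            ha', hb', hc']
        rw [← t_succ_append, hd] at hblk
        exact hblk
    have h1 := claim n (le_refl n)
    have h2 := hU (t n) (t (recF f0 st a n)) (t val) (tal_t _) (tal_t _) (tal_t _) h1 hF
    exact t_inj h2
  · intro hF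
    refine ⟨tal_t p, tal_t n, tal_t val,
      code ((List.range (n + 1)).map fun i => (i, recF f0 st p i)), ?_, ?_, ?_, ?_⟩
    · -- uniqueness
      rintro x y y' tx ty ty' h1 h2
      obtain ⟨xa, rfl⟩ := (tally_iff x).1 tx
      obtain ⟨ya, rfl⟩ := (tally_iff y).1 ty
      obtain ⟨ya', rfl⟩ := (tally_iff y').1 ty'
      rw [patS_t, pat_mem_code] at h1 h2
      simp only [List.mem_map, List.mem_range, Prod.mk.injEq] at h1 h2
      obtain ⟨i1, -, rfl, rfl⟩ := h1
      obtain ⟨i2, -, h3, rfl⟩ := h2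
      rw [h3]
    · -- init
      refine ⟨t (recF f0 st p 0), tal_t _, ⟨p, recF f0 st p 0, rfl, rfl, rfl⟩, ?_⟩
      rw [show ([] : S) = t 0 from rfl, patS_t, pat_mem_code]
      simp only [List.mem_map, List.mem_range]
      exact ⟨0, by omega, rfl⟩
    · -- step
      rintro x y tx ty hb ⟨hinf, hne⟩
      obtain ⟨xa, rfl⟩ := (tally_iff x).1 tx
      obtain ⟨ya, rfl⟩ := (tally_iff y).1 ty
      rw [patS_t, pat_mem_code] at hb
      simp only [List.mem_map, List.mem_range, Prod.mk.injEq] at hb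
      obtain ⟨i1, hi1, rfl, rfl⟩ := hb
      have hlt : i1 < n := by
        have h4 := t_infix.1 hinf
        rcases Nat.lt_or_ge i1 n with h | h
        · exact h
        · exact absurd (by rw [show i1 = n by omega]) hne
      refine ⟨t (recF f0 st p (i1 + 1)), tal_t _,
        ⟨p, i1, recF f0 st p i1, recF f0 st p (i1 + 1), rfl, rfl, rfl, rfl, rfl⟩, ?_⟩
      rw [← t_succ_append, patS_t, pat_mem_code]
      simp only [List.mem_map, List.mem_range]
      exact ⟨i1 + 1, by omega, rfl⟩
    · -- final
      rw [patS_t, pat_mem_code]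
      simp only [List.mem_map, List.mem_range]
      exact ⟨n, by omega, by rw [hF]⟩

theorem defN_rec (f0 : ℕ → ℕ) (st : ℕ → ℕ → ℕ → ℕ)
    (h0 : DefN (k := 2) fun w => f0 (w 0) = w 1)
    (hst : DefN (k := 4) fun w => st (w 0) (w 1) (w 2) = w 3) :
    DefN (k := 3) fun w => recF f0 st (w 0) (w 1) = w 2 := by
  have G0D := DefN.toDef2 (R := fun a b => f0 a = b) h0
  have GstD := DefN.toDef4 (R := fun a b c d => st a b c = d) hst
  -- uniqueness condition, arity 4 (P N V W = 0 1 2 3)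
  have body7 : Def (k := 7) fun v => Tal (v 4) → Tal (v 5) → Tal (v 6) →
      (patS (v 4) (v 5) <:+: v 3 → (patS (v 4) (v 6) <:+: v 3 → v 5 = v 6)) :=
    (def_tal.of1 4).imp ((def_tal.of1 5).imp ((def_tal.of1 6).imp
      ((Def.of3 (Q := fun x y w => patS x y <:+: w) def_blk 4 5 3).imp ((Def.of3 (Q := fun x y w => patS x y <:+: w) def_blk 4 6 3).imp (Def.of2 (Q := fun x y => x = y) def_eqv 5 6)))))
  have a6 := Def.all' (R := fun (v : Fin 6 → S) x => Tal (v 4) → Tal (v 5) → Tal x →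
      (patS (v 4) (v 5) <:+: v 3 → (patS (v 4) x <:+: v 3 → v 5 = x))) body7
  have a5 := Def.all' (R := fun (v : Fin 5 → S) y => ∀ y', Tal (v 4) → Tal y → Tal y' →
      (patS (v 4) y <:+: v 3 → (patS (v 4) y' <:+: v 3 → y = y'))) a6
  have CU := Def.all' (R := fun (v : Fin 4 → S) x => ∀ y y', Tal x → Tal y → Tal y' →
      (patS x y <:+: v 3 → (patS x y' <:+: v 3 → y = y'))) a5
  -- init condition
  have body5 : Def (k := 5) fun v => Tal (v 4) ∧
      (G2 (fun a b => f0 a = b) (v 0) (v 4) ∧ patS [] (v 4) <:+: v 3) :=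
    (def_tal.of1 4).and ((Def.of2 (Q := G2 fun a b => f0 a = b) G0D 0 4).and (Def.of2 (Q := fun c w => patS [] c <:+: w) def_blk0 4 3))
  have CI := Def.ex' (R := fun (v : Fin 4 → S) c => Tal c ∧
      (G2 (fun a b => f0 a = b) (v 0) c ∧ patS [] c <:+: v 3)) body5
  -- step condition
  have exY' := Def.ex' (R := fun (v : Fin 6 → S) y' => Tal y' ∧
      (G4 (fun a b c d => st a b c = d) (v 0) (v 4) (v 5) y' ∧
        patS (v 4 ++ [true]) y' <:+: v 3))
    ((def_tal.of1 6).and ((Def.of4 (Q := G4 fun a b c d => st a b c = d) GstD 0 4 5 6).and (Def.of3 (Q := fun x y w => patS (x ++ [true]) y <:+: w) def_blkS 4 6 3)))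
  have body6 : Def (k := 6) fun v => Tal (v 4) → Tal (v 5) →
      (patS (v 4) (v 5) <:+: v 3 → ((v 4 <:+: v 1 ∧ ¬ v 4 = v 1) →
        ∃ y', Tal y' ∧ (G4 (fun a b c d => st a b c = d) (v 0) (v 4) (v 5) y' ∧
          patS (v 4 ++ [true]) y' <:+: v 3))) :=
    (def_tal.of1 4).imp ((def_tal.of1 5).imp ((Def.of3 (Q := fun x y w => patS x y <:+: w) def_blk 4 5 3).imp
      (((Def.of2 (Q := fun x y => x <:+: y) def_inf 4 1).and ((Def.of2 (Q := fun x y => x = y) def_eqv 4 1).not)).imp exY')))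
  have s5 := Def.all' (R := fun (v : Fin 5 → S) y => Tal (v 4) → Tal y →
      (patS (v 4) y <:+: v 3 → ((v 4 <:+: v 1 ∧ ¬ v 4 = v 1) →
        ∃ y', Tal y' ∧ (G4 (fun a b c d => st a b c = d) (v 0) (v 4) y y' ∧
          patS (v 4 ++ [true]) y' <:+: v 3)))) body6
  have CS := Def.all' (R := fun (v : Fin 4 → S) x => ∀ y, Tal x → Tal y →
      (patS x y <:+: v 3 → ((x <:+: v 1 ∧ ¬ x = v 1) →
        ∃ y', Tal y' ∧ (G4 (fun a b c d => st a b c = d) (v 0) x y y' ∧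
          patS (x ++ [true]) y' <:+: v 3)))) s5
  have CF := Def.of3 (m := 4) (Q := fun x y w => patS x y <:+: w) def_blk 1 2 3
  have Cond := CU.and (CI.and (CS.and CF))
  have exW := Def.ex' (R := fun (v : Fin 3 → S) W =>
      (∀ x y y', Tal x → Tal y → Tal y' →
          (patS x y <:+: W → (patS x y' <:+: W → y = y'))) ∧
      ((∃ c, Tal c ∧ (G2 (fun a b => f0 a = b) (v 0) c ∧ patS [] c <:+: W)) ∧
      ((∀ x y, Tal x → Tal y → (patS x y <:+: W → ((x <:+: v 1 ∧ ¬ x = v 1) →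
          ∃ y', Tal y' ∧ (G4 (fun a b c d => st a b c = d) (v 0) x y y' ∧
            patS (x ++ [true]) y' <:+: W)))) ∧
       patS (v 1) (v 2) <:+: W))) Cond
  have RR := (def_tal.of1 (0 : Fin 3)).and ((def_tal.of1 1).and ((def_tal.of1 2).and exW))
  exact (DefN.ofDef RR).congr fun w => course_iff f0 st (w 0) (w 1) (w 2)

/-! ### Multiplication, pairing, and primitive recursive graphs -/

lemma recF_mul (p n : ℕ) : recF (fun _ => 0) (fun p _ prev => prev + p) p n = n * p := by
  induction n with
  | zero => rw [Nat.zero_mul]; rfl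
  | succ n ih => rw [show recF (fun _ => 0) (fun p _ prev => prev + p) p (n+1) =
      recF (fun _ => 0) (fun p _ prev => prev + p) p n + p from rfl, ih, Nat.succ_mul]

lemma defN_mul : DefN (k := 3) fun w => w 0 * w 1 = w 2 := by
  have h0 : DefN (k := 2) fun w => (fun _ : ℕ => 0) (w 0) = w 1 :=
    (DefN.of1 (Q := fun a => a = 0) (defN_const 0) 1).congr fun w => by
      simp [eq_comm]
  have hst : DefN (k := 4) fun w => (fun p _ prev => prev + p) (w 0) (w 1) (w 2) = w 3 :=
    DefN.of3 (Q := fun a b c => a + b = c) defN_add 2 0 3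
  have base := defN_rec (fun _ => 0) (fun p _ prev => prev + p) h0 hst
  refine (DefN.of3 (Q := fun a b c => recF (fun _ => 0) (fun p _ prev => prev + p) a b = c)
    base 1 0 2).congr fun w => ?_
  rw [recF_mul, Nat.mul_comm]

lemma defN_pair : DefN (k := 3) fun w => Nat.pair (w 0) (w 1) = w 2 := by
  have hA : DefN (k := 3) fun w => ∃ m, w 1 * w 1 = m ∧ m + w 0 = w 2 :=
    DefN.ex' (R := fun (w : Fin 3 → ℕ) m => w 1 * w 1 = m ∧ m + w 0 = w 2)
      ((DefN.of3 (Q := fun a b c => a * b = c) defN_mul 1 1 3).and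
        (DefN.of3 (Q := fun a b c => a + b = c) defN_add 3 0 2))
  have hB5 : DefN (k := 5) fun w => w 0 * w 0 = w 3 ∧ (w 3 + w 0 = w 4 ∧ w 4 + w 1 = w 2) :=
    (DefN.of3 (Q := fun a b c => a * b = c) defN_mul 0 0 3).and
      ((DefN.of3 (Q := fun a b c => a + b = c) defN_add 3 0 4).and
        (DefN.of3 (Q := fun a b c => a + b = c) defN_add 4 1 2))
  have hB4 := DefN.ex' (R := fun (w : Fin 4 → ℕ) m2 =>
    w 0 * w 0 = w 3 ∧ (w 3 + w 0 = m2 ∧ m2 + w 1 = w 2)) hB5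
  have hB := DefN.ex' (R := fun (w : Fin 3 → ℕ) m =>
    ∃ m2, w 0 * w 0 = m ∧ (m + w 0 = m2 ∧ m2 + w 1 = w 2)) hB4
  have hlt := DefN.of2 (Q := fun a b => a < b) defN_lt (0 : Fin 3) 1
  refine ((hlt.and hA).or (hlt.not.and hB)).congr fun w => ?_
  rw [Nat.pair]
  constructor
  · rintro (⟨h1, m, hm, hm2⟩ | ⟨h1, m, m2, hm, hm2, hm3⟩)
    · rw [if_pos h1]; omega
    · rw [if_neg h1]; omega
  · intro h
    by_cases h1 : w 0 < w 1
    · rw [if_pos h1] at h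
      exact Or.inl ⟨h1, w 1 * w 1, rfl, h⟩
    · rw [if_neg h1] at h
      exact Or.inr ⟨h1, w 0 * w 0, w 0 * w 0 + w 0, rfl, rfl, by omega⟩

lemma defN_unpair1 : DefN (k := 2) fun w => (Nat.unpair (w 0)).1 = w 1 := by
  have h := DefN.ex' (R := fun (w : Fin 2 → ℕ) b => Nat.pair (w 1) b = w 0)
    (DefN.of3 (Q := fun a b c => Nat.pair a b = c) defN_pair 1 2 0)
  refine h.congr fun w => ?_
  constructor
  · rintro ⟨b, hb⟩
    rw [← hb, Nat.unpair_pair]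
  · intro h1
    exact ⟨(Nat.unpair (w 0)).2, by
        show Nat.pair (w 1) ((Nat.unpair (w 0)).2) = w 0
        rw [← h1]
        exact Nat.pair_unpair _⟩

lemma defN_unpair2 : DefN (k := 2) fun w => (Nat.unpair (w 0)).2 = w 1 := by
  have h := DefN.ex' (R := fun (w : Fin 2 → ℕ) a => Nat.pair a (w 1) = w 0)
    (DefN.of3 (Q := fun a b c => Nat.pair a b = c) defN_pair 2 1 0)
  refine h.congr fun w => ?_
  constructor
  · rintro ⟨a, ha⟩
    rw [← ha, Nat.unpair_pair]
  · intro h1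
    exact ⟨(Nat.unpair (w 0)).1, by
        show Nat.pair ((Nat.unpair (w 0)).1) (w 1) = w 0
        rw [← h1]
        exact Nat.pair_unpair _⟩

theorem primrec_graph {f : ℕ → ℕ} (hf : Nat.Primrec f) :
    DefN (k := 2) fun w => f (w 0) = w 1 := by
  induction hf with
  | zero =>
    exact (DefN.of1 (Q := fun a => a = 0) (defN_const 0) 1).congr fun w => by simp [eq_comm]
  | succ =>
    exact defN_succ.congr fun w => Iff.rfl
  | left => exact defN_unpair1
  | right => exact defN_unpair2
  | @pair g h _ _ ihg ihh =>
    have h4 : DefN (k := 4) fun w => g (w 0) = w 2 ∧ (h (w 0) = w 3 ∧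
        Nat.pair (w 2) (w 3) = w 1) :=
      (DefN.of2 (Q := fun a b => g a = b) ihg 0 2).and
        ((DefN.of2 (Q := fun a b => h a = b) ihh 0 3).and
          (DefN.of3 (Q := fun a b c => Nat.pair a b = c) defN_pair 2 3 1))
    have h3 := DefN.ex' (R := fun (w : Fin 3 → ℕ) d => g (w 0) = w 2 ∧ (h (w 0) = d ∧
        Nat.pair (w 2) d = w 1)) h4
    have h2 := DefN.ex' (R := fun (w : Fin 2 → ℕ) c => ∃ d, g (w 0) = c ∧ (h (w 0) = d ∧
        Nat.pair c d = w 1)) h3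
    refine h2.congr fun w => ?_
    constructor
    · rintro ⟨c, d, rfl, rfl, h3⟩
      exact h3
    · intro h3
      exact ⟨g (w 0), h (w 0), rfl, rfl, h3⟩
  | @comp g h _ _ ihg ihh =>
    have h3 : DefN (k := 3) fun w => h (w 0) = w 2 ∧ g (w 2) = w 1 :=
      (DefN.of2 (Q := fun a b => h a = b) ihh 0 2).and
        (DefN.of2 (Q := fun a b => g a = b) ihg 2 1)
    have h2 := DefN.ex' (R := fun (w : Fin 2 → ℕ) c => h (w 0) = c ∧ g c = w 1) h3
    refine h2.congr fun w => ?_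
    constructor
    · rintro ⟨c, rfl, h4⟩
      exact h4
    · intro h4
      exact ⟨h (w 0), rfl, h4⟩
  | @prec g h _ _ ihg ihh =>
    set st : ℕ → ℕ → ℕ → ℕ := fun z i prev => h (Nat.pair z (Nat.pair i prev)) with hst_def
    have hst6 : DefN (k := 6) fun w => Nat.pair (w 1) (w 2) = w 4 ∧
        (Nat.pair (w 0) (w 4) = w 5 ∧ h (w 5) = w 3) :=
      (DefN.of3 (Q := fun a b c => Nat.pair a b = c) defN_pair 1 2 4).and
        ((DefN.of3 (Q := fun a b c => Nat.pair a b = c) defN_pair 0 4 5).and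
          (DefN.of2 (Q := fun a b => h a = b) ihh 5 3))
    have hst5 := DefN.ex' (R := fun (w : Fin 5 → ℕ) m2 => Nat.pair (w 1) (w 2) = w 4 ∧
        (Nat.pair (w 0) (w 4) = m2 ∧ h m2 = w 3)) hst6
    have hst4 := DefN.ex' (R := fun (w : Fin 4 → ℕ) m1 => ∃ m2, Nat.pair (w 1) (w 2) = m1 ∧
        (Nat.pair (w 0) m1 = m2 ∧ h m2 = w 3)) hst5
    have hstG : DefN (k := 4) fun w => st (w 0) (w 1) (w 2) = w 3 := by
      refine hst4.congr fun w => ?_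
      constructor
      · rintro ⟨m1, m2, rfl, rfl, h4⟩
        exact h4
      · intro h4
        exact ⟨Nat.pair (w 1) (w 2), Nat.pair (w 0) (Nat.pair (w 1) (w 2)), rfl, rfl, h4⟩
    have R3 := defN_rec g st ihg hstG
    have key : ∀ z i, recF g st z i =
        Nat.rec (motive := fun _ => ℕ) (g z) (fun y IH => h (Nat.pair z (Nat.pair y IH))) i := by
      intro z i
      induction i with
      | zero => rfl
      | succ i ih => rw [show recF g st z (i+1) = st z i (recF g st z i) from rfl, ih]
    have h4 : DefN (k := 4) fun w => Nat.pair (w 2) (w 3) = w 0 ∧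
        recF g st (w 2) (w 3) = w 1 :=
      (DefN.of3 (Q := fun a b c => Nat.pair a b = c) defN_pair 2 3 0).and
        (DefN.of3 (Q := fun a b c => recF g st a b = c) R3 2 3 1)
    have h3 := DefN.ex' (R := fun (w : Fin 3 → ℕ) n' => Nat.pair (w 2) n' = w 0 ∧
        recF g st (w 2) n' = w 1) h4
    have h2 := DefN.ex' (R := fun (w : Fin 2 → ℕ) z => ∃ n', Nat.pair z n' = w 0 ∧
        recF g st z n' = w 1) h3
    refine h2.congr fun w => ?_
    constructor
    · rintro ⟨z, n', hzn, hrec⟩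
      rw [Nat.unpaired, ← hzn, Nat.unpair_pair]
      rw [← key]
      exact hrec
    · intro h5
      refine ⟨(Nat.unpair (w 0)).1, (Nat.unpair (w 0)).2, Nat.pair_unpair _, ?_⟩
      rw [key]
      exact h5

/-! ### The main theorem -/

theorem computable_defN {f : ℕ → ℕ} (hf : Computable f) :
    DefN (k := 2) fun w => f (w 0) = w 1 := by
  obtain ⟨c, hc⟩ := Nat.Partrec.Code.exists_code.1 (Partrec.nat_iff.1 hf)
  set h : ℕ → ℕ := fun m =>
    Encodable.encode (Nat.Partrec.Code.evaln m.unpair.1 c m.unpair.2) with hh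
  have hprim : Primrec h := by
    refine Primrec.encode.comp ?_
    exact Nat.Partrec.Code.primrec_evaln.comp
      (((Primrec.fst.comp Primrec.unpair).pair (Primrec.const c)).pair
        (Primrec.snd.comp Primrec.unpair))
  have hG := primrec_graph (Primrec.nat_iff.1 hprim)
  have claim : ∀ a b : ℕ, f a = b ↔ ∃ k, h (Nat.pair k a) = b + 1 := by
    intro a b
    have h1 : f a = b ↔ b ∈ Nat.Partrec.Code.eval c a := by
      rw [hc]
      exact ⟨fun he => Part.mem_some_iff.2 he.symm, fun he => (Part.mem_some_iff.1 he).symm⟩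
    rw [h1, Nat.Partrec.Code.evaln_complete]
    refine exists_congr fun k => ?_
    rw [hh]
    simp only [Nat.unpair_pair]
    constructor
    · intro hb
      rw [Option.mem_def] at hb
      rw [hb]
      rfl
    · intro hb
      rw [Option.mem_def]
      have : Encodable.encode (Nat.Partrec.Code.evaln k c a) =
          Encodable.encode (some b) := by
        rw [hb]
        rfl
      exact Encodable.encode_injective this
  have h5 : DefN (k := 5) fun w => Nat.pair (w 2) (w 0) = w 3 ∧
      (h (w 3) = w 4 ∧ w 1 + 1 = w 4) :=
    (DefN.of3 (Q := fun a b c => Nat.pair a b = c) defN_pair 2 0 3).and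
      ((DefN.of2 (Q := fun a b => h a = b) hG 3 4).and
        (DefN.of2 (Q := fun a b => a + 1 = b) defN_succ 1 4))
  have h4 := DefN.ex' (R := fun (w : Fin 4 → ℕ) s => Nat.pair (w 2) (w 0) = w 3 ∧
      (h (w 3) = s ∧ w 1 + 1 = s)) h5
  have h3 := DefN.ex' (R := fun (w : Fin 3 → ℕ) m => ∃ s, Nat.pair (w 2) (w 0) = m ∧
      (h m = s ∧ w 1 + 1 = s)) h4
  have h2 := DefN.ex' (R := fun (w : Fin 2 → ℕ) k => ∃ m s, Nat.pair k (w 0) = m ∧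
      (h m = s ∧ w 1 + 1 = s)) h3
  refine h2.congr fun w => ?_
  rw [claim (w 0) (w 1)]
  constructor
  · rintro ⟨k, m, s, hm, hs, hsucc⟩
    exact ⟨k, by rw [hm, hs, ← hsucc]⟩
  · rintro ⟨k, hk⟩
    exact ⟨k, Nat.pair k (w 0), w 1 + 1, rfl, by rw [hk], rfl⟩

theorem stmt_16 (f : ℕ → ℕ) (hf : Computable f) :
    ∃ φ : LBT.Formula (Fin 2),
      ∀ a b : ℕ, f a = b ↔
        φ.Realize (M := List Bool)
          (fun i => if i = 0 then List.replicate a true else List.replicate b true) := by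
  obtain ⟨φ, hφ⟩ := computable_defN hf
  refine ⟨φ, fun a b => ?_⟩
  have hw := hφ (fun j => if j = (0 : Fin 2) then a else b)
  have hv : (fun i => t ((fun j => if j = (0 : Fin 2) then a else b) i)) =
      (fun i : Fin 2 => if i = 0 then List.replicate a true else List.replicate b true) := by
    funext i
    by_cases hi : i = 0 <;> simp [hi, t]
  rw [hv] at hw
  exact hw.symm
end

section
/- For every bit string α, the set of bit strings β with |β| ≤ |α| is finite, and for any model of the axioms F₅–F₁₁ (the theory F), every element x satisfying x ⊴ biteral(α) equals biteral(β) for some bit string β with |β| ≤ |α|. -/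
/-- The biteral map in a structure `(M, op, e, z, o)`. -/
def biteral {M : Type*} (op : M → M → M) (e z o : M) (α : List Bool) : M :=
  α.foldl (fun m b => op m (if b then o else z)) e

lemma biteral_append_singleton {M : Type*} (op : M → M → M) (e z o : M)
    (α : List Bool) (b : Bool) :
    biteral op e z o (α ++ [b]) = op (biteral op e z o α) (if b then o else z) := by
  simp [biteral, List.foldl_append]

theorem stmt_18 {M : Type*} (op : M → M → M) (e z o : M) (rel : M → M → Prop)
    (hB1 : ∀ x, x = op e x ∧ x = op x e)
    (hB2 : ∀ x y w, op (op x y) w = op x (op y w))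
    (hB3 : ∀ x y, x ≠ y → op x z ≠ op y z ∧ op x o ≠ op y o)
    (hB4 : ∀ x y, op x z ≠ op y o)
    (hF5 : ∀ x, rel e x)
    (hF6 : ∀ x, rel x e → x = e)
    (hF7 : ∀ x y, rel (op x z) (op y z) ↔ rel x y)
    (hF8 : ∀ x y, rel (op x z) (op y o) ↔ rel x y)
    (hF9 : ∀ x y, rel (op x o) (op y z) ↔ rel x y)
    (hF10 : ∀ x y, rel (op x o) (op y o) ↔ rel x y)
    (hF11 : ∀ x, x = e ∨ ∃ y, x = op y z ∨ x = op y o) :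
    ∀ α : List Bool,
      {β : List Bool | β.length ≤ α.length}.Finite ∧
      ∀ x : M, rel x (biteral op e z o α) →
        ∃ β : List Bool, β.length ≤ α.length ∧ x = biteral op e z o β := by
  intro α
  refine ⟨List.finite_length_le Bool α.length, ?_⟩
  induction α using List.reverseRecOn with
  | nil =>
    intro x hx
    exact ⟨[], by simp, hF6 x hx⟩
  | append_singleton α b ih =>
    intro x hx
    rw [biteral_append_singleton] at hx
    rcases hF11 x with rfl | ⟨y, rfl | rfl⟩
    · exact ⟨[], by simp, rfl⟩
    · have hy : rel y (biteral op e z o α) := by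
        cases b
        · simpa using (hF7 y _).mp hx
        · simpa using (hF8 y _).mp hx
      obtain ⟨β, hβ, rfl⟩ := ih y hy
      refine ⟨β ++ [false], by simp; omega, ?_⟩
      rw [biteral_append_singleton]; simp
    · have hy : rel y (biteral op e z o α) := by
        cases b
        · simpa using (hF9 y _).mp hx
        · simpa using (hF10 y _).mp hx
      obtain ⟨β, hβ, rfl⟩ := ih y hy
      refine ⟨β ++ [true], by simp; omega, ?_⟩
      rw [biteral_append_singleton]; simp
end
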